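/- Let π be a permutation of size n, π ≠ id_n, and let m be the length of the longest suffix of π consisting of left-to-right maxima (equivalently, the largest m with π ending in (n−m+1)(n−m+2)⋯n). Then the rooted tree T(π) of iterated bubblesort preimages has depth exactly m. -/

import Mathlib

/-- One pass of bubblesort on a list of naturals. -/
def bpass : List ℕ → List ℕ
  | [] => []
  | [a] => [a]
  | a :: b :: l => if b < a then b :: bpass (a :: l) else a :: bpass (b :: l)

/-- The identity permutation 1 2 ... n as a list. -/
def idList (n : ℕ) : List ℕ := List.map (· + 1) (List.range n)

/-- `l` is (the word of) a permutation of size `n`, i.e. a rearrangement of 1,...,n. -/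
def IsPermList (n : ℕ) (l : List ℕ) : Prop := l.Perm (idList n)

/-- position `j` of `l` holds a left-to-right maximum. -/
def IsLTRMax (l : List ℕ) (j : ℕ) : Prop :=
  j < l.length ∧ ∀ i < j, l.getD i 0 < l.getD j 0

instance (l : List ℕ) (j : ℕ) : Decidable (IsLTRMax l j) := by
  unfold IsLTRMax; infer_instance

/-- the number of left-to-right maxima of `l`. -/
def ltrCount (l : List ℕ) : ℕ :=
  ((List.range l.length).filter fun j => decide (IsLTRMax l j)).length

/-- the length of the longest suffix of `l` consisting of left-to-right maxima. -/
def suffLen (l : List ℕ) : ℕ :=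
  ((List.range l.length).takeWhile fun j => decide (IsLTRMax l (l.length - 1 - j))).length

lemma bpass_perm (l : List ℕ) : (bpass l).Perm l := by
  induction l using bpass.induct with
  | case1 => simp [bpass]
  | case2 a => simp [bpass]
  | case3 a b l h ih =>
    simp only [bpass, if_pos h]
    exact ((ih.cons b).trans (List.Perm.swap ..))
  | case4 a b l h ih =>
    simp only [bpass, if_neg h]
    exact ih.cons a

lemma bpass_length (l : List ℕ) : (bpass l).length = l.length :=
  (bpass_perm l).length_eq

lemma bpass_sorted {l : List ℕ} (h : l.Pairwise (· ≤ ·)) : bpass l = l := by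
  induction l using bpass.induct with
  | case1 => simp [bpass]
  | case2 a => simp [bpass]
  | case3 a b l hb ih =>
    exact absurd (List.rel_of_pairwise_cons h (by simp : b ∈ b :: l)) (by omega)
  | case4 a b l hb ih =>
    simp only [bpass, if_neg hb]
    rw [ih h.of_cons]

lemma bpass_head_max {q : List ℕ} {a : ℕ} (h : ∀ x ∈ q, x < a) :
    bpass (a :: q) = q ++ [a] := by
  induction q generalizing a with
  | nil => simp [bpass]
  | cons b q ih =>
    have hb : b < a := h b (by simp)
    simp only [bpass, if_pos hb, List.cons_append, List.cons.injEq, true_and]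
    exact ih fun x hx => h x (by simp [hx])

lemma bpass_append {q s : List ℕ} (h : ∀ x ∈ q, ∀ y ∈ s, x ≤ y)
    (hs : s.Pairwise (· ≤ ·)) : bpass (q ++ s) = bpass q ++ s := by
  induction q using bpass.induct with
  | case1 => simpa [bpass] using bpass_sorted hs
  | case2 a =>
    cases s with
    | nil => simp
    | cons y s' =>
      have hay : a ≤ y := h a (by simp) y (by simp)
      show bpass (a :: y :: s') = bpass [a] ++ y :: s'
      rw [show bpass (a :: y :: s') = a :: bpass (y :: s') by
        simp only [bpass]; rw [if_neg (by omega)]]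
      rw [bpass_sorted hs]
      simp [bpass]
  | case3 a b l hb ih =>
    show bpass (a :: b :: (l ++ s)) = bpass (a :: b :: l) ++ s
    rw [show bpass (a :: b :: (l ++ s)) = b :: bpass (a :: (l ++ s)) by
        simp only [bpass]; rw [if_pos hb],
      show bpass (a :: b :: l) = b :: bpass (a :: l) by
        simp only [bpass]; rw [if_pos hb]]
    rw [show a :: (l ++ s) = (a :: l) ++ s from rfl,
      ih (fun x hx => h x (by revert hx; simp; tauto))]
    simp
  | case4 a b l hb ih =>
    show bpass (a :: b :: (l ++ s)) = bpass (a :: b :: l) ++ s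
    rw [show bpass (a :: b :: (l ++ s)) = a :: bpass (b :: (l ++ s)) by
        simp only [bpass]; rw [if_neg hb],
      show bpass (a :: b :: l) = a :: bpass (b :: l) by
        simp only [bpass]; rw [if_neg hb]]
    rw [show b :: (l ++ s) = (b :: l) ++ s from rfl,
      ih (fun x hx => h x (by revert hx; simp; tauto))]
    simp

lemma bpass_last {q : List ℕ} (hq : q ≠ []) :
    ∃ q' M, bpass q = q' ++ [M] ∧ M ∈ q ∧ ∀ x ∈ q, x ≤ M := by
  obtain ⟨a, q, rfl⟩ := List.exists_cons_of_ne_nil hq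
  clear hq
  induction q generalizing a with
  | nil => exact ⟨[], a, by simp [bpass]⟩
  | cons b q ih =>
    by_cases hb : b < a
    · obtain ⟨q', M, h1, h2, h3⟩ := ih a
      have haM : a ≤ M := h3 a (by simp)
      refine ⟨b :: q', M, ?_, ?_, ?_⟩
      · rw [show bpass (a :: b :: q) = b :: bpass (a :: q) by
          simp only [bpass]; rw [if_pos hb], h1]; rfl
      · revert h2; simp; tauto
      · intro x hx
        rcases List.mem_cons.1 hx with rfl | hx'
        · omega
        · rcases List.mem_cons.1 hx' with rfl | hx2
          · omega
          · exact h3 x (by simp [hx2])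
    · obtain ⟨q', M, h1, h2, h3⟩ := ih b
      have hbM : b ≤ M := h3 b (by simp)
      refine ⟨a :: q', M, ?_, ?_, ?_⟩
      · rw [show bpass (a :: b :: q) = a :: bpass (b :: q) by
          simp only [bpass]; rw [if_neg hb], h1]; rfl
      · revert h2; simp; tauto
      · intro x hx
        rcases List.mem_cons.1 hx with rfl | hx'
        · omega
        · exact h3 x hx'

lemma idList_length (n : ℕ) : (idList n).length = n := by simp [idList]

lemma idList_getElem {n i : ℕ} (h : i < n) :
    (idList n)[i]'(by simp [idList_length, h]) = i + 1 := by simp [idList]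

lemma idList_nodup (n : ℕ) : (idList n).Nodup :=
  List.Nodup.map (fun a b => by omega) (List.nodup_range (n := n))

lemma idList_mem {n x : ℕ} : x ∈ idList n ↔ 1 ≤ x ∧ x ≤ n := by
  simp only [idList, List.mem_map, List.mem_range]
  constructor
  · rintro ⟨i, hi, rfl⟩; omega
  · rintro ⟨h1, h2⟩; exact ⟨x - 1, by omega, by omega⟩

lemma idList_sorted (n : ℕ) : (idList n).Pairwise (· ≤ ·) := by
  rw [List.pairwise_iff_getElem]
  intro i j hi hj hij
  rw [idList_getElem (by simpa [idList_length] using hi),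
    idList_getElem (by simpa [idList_length] using hj)]
  omega

lemma bpass_idList (n : ℕ) : bpass (idList n) = idList n := bpass_sorted (idList_sorted n)

lemma permList_length {n : ℕ} {l : List ℕ} (h : IsPermList n l) : l.length = n := by
  rw [h.length_eq, idList_length]

lemma permList_nodup {n : ℕ} {l : List ℕ} (h : IsPermList n l) : l.Nodup :=
  h.symm.nodup (idList_nodup n)

lemma permList_mem {n x : ℕ} {l : List ℕ} (h : IsPermList n l) :
    x ∈ l ↔ 1 ≤ x ∧ x ≤ n := by rw [List.Perm.mem_iff h, idList_mem]

lemma permList_bpass {n : ℕ} {l : List ℕ} (h : IsPermList n l) :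
    IsPermList n (bpass l) := (bpass_perm l).trans h

lemma permList_iterate {n : ℕ} {l : List ℕ} (h : IsPermList n l) (j : ℕ) :
    IsPermList n (bpass^[j] l) := by
  induction j with
  | zero => exact h
  | succ j ih => rw [Function.iterate_succ_apply']; exact permList_bpass ih

lemma takeWhile_len_ge {p : ℕ → Bool} :
    ∀ (l : List ℕ) (t : ℕ), t ≤ (l.takeWhile p).length ↔
      t ≤ l.length ∧ ∀ i < t, p (l.getD i 0) = true := by
  intro l
  induction l with
  | nil =>
    intro t
    simp only [List.takeWhile_nil, List.length_nil]
    exact ⟨fun h => ⟨h, fun i hi => by omega⟩, fun h => h.1⟩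
  | cons a l ih =>
    intro t
    cases t with
    | zero => simp
    | succ t =>
      by_cases hp : p a
      · rw [List.takeWhile_cons_of_pos hp]
        simp only [List.length_cons, Nat.succ_le_succ_iff, ih l.length |>.symm]
        constructor
        · intro h
          refine ⟨by have := (ih t).1 ?_ |>.1; omega; exact h, ?_⟩
          · intro i hi
            cases i with
            | zero => simpa using hp
            | succ i => simpa using ((ih t).1 h).2 i (by omega)
        · intro ⟨h1, h2⟩
          refine (ih t).2 ⟨by omega, ?_⟩
          intro i hi
          simpa using h2 (i + 1) (by omega)
      · rw [List.takeWhile_cons_of_neg hp]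
        simp only [List.length_nil]
        constructor
        · omega
        · intro ⟨h1, h2⟩
          exact absurd (by simpa using h2 0 (by omega)) hp

lemma suffLen_ge_iff {l : List ℕ} {t : ℕ} :
    t ≤ suffLen l ↔ t ≤ l.length ∧ ∀ j < t, IsLTRMax l (l.length - 1 - j) := by
  rw [suffLen, takeWhile_len_ge]
  simp only [List.length_range]
  constructor
  · intro ⟨h1, h2⟩
    refine ⟨h1, fun j hj => ?_⟩
    have := h2 j hj
    rw [List.getD_eq_getElem _ _ (by simp; omega), List.getElem_range] at this
    exact of_decide_eq_true this
  · intro ⟨h1, h2⟩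
    refine ⟨h1, fun j hj => ?_⟩
    rw [List.getD_eq_getElem _ _ (by simp; omega), List.getElem_range]
    exact decide_eq_true (h2 j hj)

/-- The last `t` entries of `l` are `n-t+1, ..., n` (positionwise). -/
def TopAt (n t : ℕ) (l : List ℕ) : Prop := ∀ j < t, l.getD (n - 1 - j) 0 = n - j

lemma nodup_ne_idx {l : List ℕ} (hnd : l.Nodup) {i j : ℕ} (hi : i < l.length)
    (hj : j < l.length) (hij : i ≠ j) : l[i] ≠ l[j] := by
  intro h
  exact hij (List.Nodup.getElem_inj_iff hnd |>.1 h)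

lemma top_of_suffLen {n t : ℕ} {l : List ℕ} (h : IsPermList n l) (ht : t ≤ suffLen l) :
    TopAt n t l := by
  have hlen := permList_length h
  have hnd := permList_nodup h
  obtain ⟨h1, h2⟩ := suffLen_ge_iff.1 ht
  rw [hlen] at h1 h2
  intro j
  induction j using Nat.strong_induction_on with
  | _ j IH =>
    intro hj
    obtain ⟨hp, hmax⟩ := h2 j hj
    rw [hlen] at hp
    have hplen : n - 1 - j < l.length := by omega
    rw [List.getD_eq_getElem l 0 hplen]
    set v := l[n - 1 - j] with hv
    have hvmem : v ∈ l := List.getElem_mem hplen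
    have hvb : 1 ≤ v ∧ v ≤ n := (permList_mem h).1 hvmem
    -- step (a): v ≤ n - j
    have ha : v ≤ n - j := by
      by_contra hcon
      push_neg at hcon
      set j' := n - v with hj'
      have hj'lt : j' < j := by omega
      have := IH j' (by omega) (by omega)
      rw [List.getD_eq_getElem l 0 (by omega : n - 1 - j' < l.length)] at this
      exact nodup_ne_idx hnd (by omega : n - 1 - j' < l.length) hplen (by omega)
        (by rw [this]; omega)
    -- step (b): the value n - j sits at position n-1-j
    have hmem : (n - j) ∈ l := (permList_mem h).2 ⟨by omega, by omega⟩
    obtain ⟨q, hq, hqe⟩ := List.getElem_of_mem hmem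
    rcases lt_trichotomy q (n - 1 - j) with hlt | heq | hgt
    · have := hmax q hlt
      rw [List.getD_eq_getElem l 0 (by omega), List.getD_eq_getElem l 0 hplen] at this
      omega
    · have hgd : l.getD q 0 = n - j := by
        rw [List.getD_eq_getElem l 0 hq, hqe]
      rw [heq, List.getD_eq_getElem l 0 hplen] at hgd
      exact hgd
    · set j'' := n - 1 - q with hj''
      have hj''lt : j'' < j := by omega
      have hthis := IH j'' (by omega) (by omega)
      have hq' : n - 1 - j'' = q := by omega
      rw [hq', List.getD_eq_getElem l 0 hq, hqe] at hthis
      omega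

lemma suffLen_of_top {n t : ℕ} {l : List ℕ} (h : IsPermList n l) (ht : t ≤ n)
    (htop : TopAt n t l) : t ≤ suffLen l := by
  have hlen := permList_length h
  have hnd := permList_nodup h
  rw [suffLen_ge_iff, hlen]
  refine ⟨ht, fun j hj => ⟨by rw [hlen]; omega, fun i hi => ?_⟩⟩
  have hplen : n - 1 - j < l.length := by omega
  have hilen : i < l.length := by omega
  rw [List.getD_eq_getElem l 0 hplen, List.getD_eq_getElem l 0 hilen]
  have hval := htop j hj
  rw [List.getD_eq_getElem l 0 hplen] at hval
  rw [hval]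
  have hmem : l[i] ∈ l := List.getElem_mem hilen
  have hib : 1 ≤ l[i] ∧ l[i] ≤ n := (permList_mem h).1 hmem
  by_contra hcon
  push_neg at hcon
  set j' := n - l[i] with hj'
  have hj'le : j' ≤ j := by omega
  have := htop j' (by omega)
  rw [List.getD_eq_getElem l 0 (by omega : n - 1 - j' < l.length)] at this
  exact nodup_ne_idx hnd hilen (by omega : n - 1 - j' < l.length) (by omega)
    (by rw [this]; omega)

lemma eq_id_of_top {n : ℕ} {l : List ℕ} (h : IsPermList n l) (htop : TopAt n n l) :
    l = idList n := by
  have hlen := permList_length h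
  apply List.ext_getElem (by rw [hlen, idList_length])
  intro i hi hi'
  have hin : i < n := by omega
  have hthis := htop (n - 1 - i) (by omega)
  have h1 : n - 1 - (n - 1 - i) = i := by omega
  rw [h1, List.getD_eq_getElem l 0 hi] at hthis
  rw [hthis, idList_getElem hin]
  omega

lemma getD_append_left {l1 l2 : List ℕ} {i : ℕ} (h : i < l1.length) :
    (l1 ++ l2).getD i 0 = l1.getD i 0 := by
  simp only [List.getD_eq_getElem?_getD, List.getElem?_append_left h]

lemma getD_append_right {l1 l2 : List ℕ} {i : ℕ} (h : l1.length ≤ i) :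
    (l1 ++ l2).getD i 0 = l2.getD (i - l1.length) 0 := by
  simp only [List.getD_eq_getElem?_getD, List.getElem?_append_right h]

lemma getD_drop {l : List ℕ} {k i : ℕ} : (l.drop k).getD i 0 = l.getD (k + i) 0 := by
  simp only [List.getD_eq_getElem?_getD, List.getElem?_drop]

lemma getD_take {l : List ℕ} {k i : ℕ} (h : i < k) :
    (l.take k).getD i 0 = l.getD i 0 := by
  simp only [List.getD_eq_getElem?_getD, List.getElem?_take_of_lt h]

lemma getD_mem {l : List ℕ} {i : ℕ} (h : i < l.length) : l.getD i 0 ∈ l := by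
  rw [List.getD_eq_getElem l 0 h]; exact List.getElem_mem h

lemma nodup_getD_ne {l : List ℕ} (hnd : l.Nodup) {i j : ℕ} (hi : i < l.length)
    (hj : j < l.length) (hij : i ≠ j) : l.getD i 0 ≠ l.getD j 0 := by
  rw [List.getD_eq_getElem l 0 hi, List.getD_eq_getElem l 0 hj]
  exact nodup_ne_idx hnd hi hj hij

lemma mem_getD {l : List ℕ} {x : ℕ} (h : x ∈ l) :
    ∃ i, i < l.length ∧ l.getD i 0 = x := by
  obtain ⟨i, hi, he⟩ := List.getElem_of_mem h
  exact ⟨i, hi, by rw [List.getD_eq_getElem l 0 hi, he]⟩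

lemma suffLen_bound {l : List ℕ} : suffLen l ≤ l.length :=
  (suffLen_ge_iff.1 (le_refl (suffLen l))).1

lemma suffLen_lt {n : ℕ} {l : List ℕ} (h : IsPermList n l) (hne : l ≠ idList n) :
    suffLen l < n := by
  have hlen := permList_length h
  have htle : suffLen l ≤ n := hlen ▸ suffLen_bound
  rcases eq_or_lt_of_le htle with heq | hlt
  · refine absurd (eq_id_of_top h ?_) hne
    have := top_of_suffLen h (le_refl (suffLen l))
    rwa [heq] at this
  · exact hlt

/-- Key step: one bubblesort pass on a non-identity permutation strictly
increases the sorted top suffix. -/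
lemma suffLen_bpass {n : ℕ} {l : List ℕ} (h : IsPermList n l) (hne : l ≠ idList n) :
    suffLen l + 1 ≤ suffLen (bpass l) := by
  have hlen := permList_length h
  have hnd := permList_nodup h
  have htn : suffLen l < n := suffLen_lt h hne
  have htop : TopAt n (suffLen l) l := top_of_suffLen h (le_refl _)
  obtain ⟨t, htdef⟩ : ∃ t, t = suffLen l := ⟨_, rfl⟩
  rw [← htdef] at htn htop ⊢
  -- values of l at positions ≥ n - t
  have hlval : ∀ i, n - t ≤ i → i < n → l.getD i 0 = i + 1 := by
    intro i h1 h2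
    have h3 := htop (n - 1 - i) (by omega)
    rw [show n - 1 - (n - 1 - i) = i by omega] at h3
    rw [h3]; omega
  -- elements of the prefix are at most n - t
  have hqval : ∀ x ∈ l.take (n - t), x ≤ n - t := by
    intro x hx
    have hxl : x ∈ l := List.mem_of_mem_take hx
    have hxb := (permList_mem h).1 hxl
    obtain ⟨iq, hiq, hiqe⟩ := mem_getD hx
    have hiq' : iq < n - t := by rw [List.length_take] at hiq; omega
    rw [getD_take hiq'] at hiqe
    by_contra hcon
    push_neg at hcon
    refine nodup_getD_ne hnd (by omega : iq < l.length)
      (by omega : n - 1 - (n - x) < l.length) (by omega) ?_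
    rw [hiqe, htop (n - x) (by omega)]
    omega
  have hsorted : (l.drop (n - t)).Pairwise (· ≤ ·) := by
    rw [List.pairwise_iff_getElem]
    intro i j hi hj hij
    rw [List.length_drop] at hi hj
    rw [← List.getD_eq_getElem _ 0 (by rw [List.length_drop]; omega),
      ← List.getD_eq_getElem _ 0 (by rw [List.length_drop]; omega),
      getD_drop, getD_drop, hlval _ (by omega) (by omega), hlval _ (by omega) (by omega)]
    omega
  have hle : ∀ x ∈ l.take (n - t), ∀ y ∈ l.drop (n - t), x ≤ y := by
    intro x hx y hy
    obtain ⟨i, hi, hie⟩ := mem_getD hy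
    rw [List.length_drop] at hi
    rw [getD_drop, hlval _ (by omega) (by omega)] at hie
    have := hqval x hx
    omega
  have hbl : bpass l = bpass (l.take (n - t)) ++ l.drop (n - t) := by
    conv_lhs => rw [← List.take_append_drop (n - t) l]
    rw [bpass_append hle hsorted]
  have hbperm : IsPermList n (bpass l) := permList_bpass h
  have hqlen : (l.take (n - t)).length = n - t := by rw [List.length_take]; omega
  have hbqlen : (bpass (l.take (n - t))).length = n - t := by rw [bpass_length, hqlen]
  -- max of the prefix is n - t, and bpass puts it last
  have hqne : l.take (n - t) ≠ [] := by
    intro hq0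
    rw [hq0] at hqlen
    simp at hqlen; omega
  obtain ⟨q', M, hbq, hMmem, hMmax⟩ := bpass_last hqne
  have hMle : M ≤ n - t := hqval M hMmem
  have hntq : (n - t) ∈ l.take (n - t) := by
    have hmem : (n - t) ∈ l := (permList_mem h).2 ⟨by omega, by omega⟩
    obtain ⟨r, hr, hre⟩ := mem_getD hmem
    have hrlt : r < n - t := by
      by_contra hcon
      push_neg at hcon
      have := hlval r hcon (by omega)
      omega
    have hmem' : (l.take (n - t)).getD r 0 ∈ l.take (n - t) :=
      getD_mem (by rw [List.length_take]; omega)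
    rwa [getD_take hrlt, hre] at hmem'
  have hM : M = n - t := le_antisymm hMle (hMmax _ hntq)
  have hq'len : q'.length = n - t - 1 := by
    have := congrArg List.length hbq
    rw [bpass_length, hqlen] at this
    simp at this
    omega
  have htop' : TopAt n (t + 1) (bpass l) := by
    intro j hj
    rcases Nat.lt_or_ge j t with hjt | hjt
    · rw [hbl, getD_append_right (by rw [hbqlen]; omega), hbqlen, getD_drop,
        show n - t + (n - 1 - j - (n - t)) = n - 1 - j by omega,
        hlval _ (by omega) (by omega)]
      omega
    · have hjt' : j = t := by omega
      rw [hjt', hbl, getD_append_left (by rw [hbqlen]; omega), hbq,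
        getD_append_right (by rw [hq'len]; omega), hq'len,
        show n - 1 - t - (n - t - 1) = 0 by omega]
      simp [hM]
  exact suffLen_of_top hbperm (by omega) htop'

/-- Upper bound: reaching a non-identity `π` by `j` passes forces `j ≤ suffLen π`. -/
lemma le_suffLen_of_iterate {n : ℕ} {σ : List ℕ} (hσ : IsPermList n σ) :
    ∀ {j : ℕ} {π : List ℕ}, bpass^[j] σ = π → π ≠ idList n → j ≤ suffLen π := by
  intro j
  induction j with
  | zero => intro π _ _; exact Nat.zero_le _
  | succ j ih =>
    intro π hit hne
    rw [Function.iterate_succ_apply'] at hit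
    have hρ : IsPermList n (bpass^[j] σ) := permList_iterate hσ j
    by_cases hρid : bpass^[j] σ = idList n
    · rw [hρid, bpass_idList] at hit
      exact absurd hit.symm hne
    · have h1 : j ≤ suffLen (bpass^[j] σ) := ih rfl hρid
      have h2 := suffLen_bpass hρ hρid
      rw [hit] at h2
      omega

/-- Existence: if `s ≤ suffLen π` then some permutation needs exactly `s` passes. -/
lemma exists_iterate {n : ℕ} :
    ∀ (s : ℕ) (π : List ℕ), IsPermList n π → π ≠ idList n → s ≤ suffLen π →
      ∃ σ, IsPermList n σ ∧ bpass^[s] σ = π := by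
  intro s
  induction s with
  | zero => exact fun π hπ _ _ => ⟨π, hπ, rfl⟩
  | succ s ih =>
    intro π hπ hne hs
    have hlen := permList_length hπ
    have hnd := permList_nodup hπ
    obtain ⟨t, htdef⟩ : ∃ t, t = suffLen π := ⟨_, rfl⟩
    rw [← htdef] at hs
    have htn : t < n := htdef ▸ suffLen_lt hπ hne
    have htop : TopAt n t π := top_of_suffLen hπ (le_of_eq htdef)
    have hlval : ∀ i, n - t ≤ i → i < n → π.getD i 0 = i + 1 := by
      intro i h1 h2
      have h3 := htop (n - 1 - i) (by omega)
      rw [show n - 1 - (n - 1 - i) = i by omega] at h3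
      rw [h3]; omega
    have hqval : ∀ x ∈ π.take (n - t), x ≤ n - t := by
      intro x hx
      have hxl : x ∈ π := List.mem_of_mem_take hx
      have hxb := (permList_mem hπ).1 hxl
      obtain ⟨iq, hiq, hiqe⟩ := mem_getD hx
      have hiq' : iq < n - t := by rw [List.length_take] at hiq; omega
      rw [getD_take hiq'] at hiqe
      by_contra hcon
      push_neg at hcon
      refine nodup_getD_ne hnd (by omega : iq < π.length)
        (by omega : n - 1 - (n - x) < π.length) (by omega) ?_
      rw [hiqe, htop (n - x) (by omega)]
      omega
    -- decomposition π = q ++ (n-t+1) :: s'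
    have hmid : π[n - t]'(by omega) = n - t + 1 := by
      have := hlval (n - t) (le_refl _) (by omega)
      rwa [List.getD_eq_getElem π 0 (by omega)] at this
    have hdec : π = π.take (n - t) ++ (n - t + 1) :: π.drop (n - t + 1) := by
      conv_lhs => rw [← List.take_append_drop (n - t) π]
      rw [List.drop_eq_getElem_cons (by omega : n - t < π.length), hmid]
    -- the new permutation ρ
    have hρperm : IsPermList n ((n - t + 1) :: (π.take (n - t) ++ π.drop (n - t + 1))) := by
      refine List.Perm.trans ?_ hπ
      conv_rhs => rw [hdec]
      exact List.perm_middle.symm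
    have hs'val : ∀ i, i < t - 1 → (π.drop (n - t + 1)).getD i 0 = n - t + 2 + i := by
      intro i hi
      rw [getD_drop, hlval (n - t + 1 + i) (by omega) (by omega)]
      omega
    have hs'len : (π.drop (n - t + 1)).length = t - 1 := by
      rw [List.length_drop]; omega
    have hbρ : bpass ((n - t + 1) :: (π.take (n - t) ++ π.drop (n - t + 1))) = π := by
      have h1 : ∀ x ∈ (n - t + 1) :: π.take (n - t), ∀ y ∈ π.drop (n - t + 1), x ≤ y := by
        intro x hx y hy
        obtain ⟨i, hi, hie⟩ := mem_getD hy
        rw [hs'len] at hi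
        rw [hs'val i hi] at hie
        rcases List.mem_cons.1 hx with rfl | hx'
        · omega
        · have := hqval x hx'; omega
      have h2 : (π.drop (n - t + 1)).Pairwise (· ≤ ·) := by
        rw [List.pairwise_iff_getElem]
        intro i j hi hj hij
        rw [hs'len] at hi hj
        rw [← List.getD_eq_getElem _ 0 (by rw [hs'len]; omega),
          ← List.getD_eq_getElem _ 0 (by rw [hs'len]; omega),
          hs'val i (by omega), hs'val j (by omega)]
        omega
      have h3 : bpass ((n - t + 1) :: π.take (n - t)) = π.take (n - t) ++ [n - t + 1] :=
        bpass_head_max (fun x hx => by have := hqval x hx; omega)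
      calc bpass ((n - t + 1) :: (π.take (n - t) ++ π.drop (n - t + 1)))
          = bpass (((n - t + 1) :: π.take (n - t)) ++ π.drop (n - t + 1)) := by
            rw [List.cons_append]
        _ = bpass ((n - t + 1) :: π.take (n - t)) ++ π.drop (n - t + 1) :=
            bpass_append h1 h2
        _ = (π.take (n - t) ++ [n - t + 1]) ++ π.drop (n - t + 1) := by rw [h3]
        _ = π.take (n - t) ++ (n - t + 1) :: π.drop (n - t + 1) := by
            rw [List.append_assoc]; rfl
        _ = π := hdec.symm
    have hρne : (n - t + 1) :: (π.take (n - t) ++ π.drop (n - t + 1)) ≠ idList n := by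
      intro he
      rw [he, bpass_idList] at hbρ
      exact hne hbρ.symm
    have hρtop : TopAt n (t - 1) ((n - t + 1) :: (π.take (n - t) ++ π.drop (n - t + 1))) := by
      intro j hj
      have hpre : ((n - t + 1) :: π.take (n - t)).length = n - t + 1 := by
        rw [List.length_cons, List.length_take]; omega
      rw [show (n - t + 1) :: (π.take (n - t) ++ π.drop (n - t + 1))
          = ((n - t + 1) :: π.take (n - t)) ++ π.drop (n - t + 1) from by rw [List.cons_append]]
      rw [getD_append_right (by rw [hpre]; omega), hpre,
        hs'val (n - 1 - j - (n - t + 1)) (by omega)]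
      omega
    have hρs : s ≤ suffLen ((n - t + 1) :: (π.take (n - t) ++ π.drop (n - t + 1))) := by
      have := suffLen_of_top hρperm (by omega : t - 1 ≤ n) hρtop
      omega
    obtain ⟨σ, hσ, hσρ⟩ := ih _ hρperm hρne hρs
    exact ⟨σ, hσ, by rw [Function.iterate_succ_apply', hσρ, hbρ]⟩

/-- `σ` is a node of the tree `T(π)` of iterated bubblesort preimages. -/
def IsNode (n : ℕ) (π σ : List ℕ) : Prop :=
  IsPermList n σ ∧ ∃ j, bpass^[j] σ = π

/-- `σ` is a node of `T(π)` at height `j` (j passes needed to reach π, and no fewer). -/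
def IsNodeAt (n : ℕ) (π σ : List ℕ) (j : ℕ) : Prop :=
  IsPermList n σ ∧ bpass^[j] σ = π ∧ ∀ i < j, bpass^[i] σ ≠ π

/-- `τ` is a leaf: it has no child, i.e. no bubblesort preimage other than itself. -/
def IsLeafNode (n : ℕ) (τ : List ℕ) : Prop :=
  ¬ ∃ ρ, IsPermList n ρ ∧ ρ ≠ τ ∧ bpass ρ = τ

/-- `T(π)` and `T(τ)` are isomorphic as rooted trees: there is a bijection between
their node sets sending root to root and commuting with the parent map `bpass`. -/
def TreeIso (n : ℕ) (π τ : List ℕ) : Prop :=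
  ∃ φ : List ℕ → List ℕ,
    (∀ σ, IsNode n π σ → IsNode n τ (φ σ)) ∧
    (∀ σ σ', IsNode n π σ → IsNode n π σ' → φ σ = φ σ' → σ = σ') ∧
    (∀ ρ, IsNode n τ ρ → ∃ σ, IsNode n π σ ∧ φ σ = ρ) ∧
    φ π = τ ∧
    (∀ σ, IsNode n π σ → σ ≠ π → φ (bpass σ) = bpass (φ σ))

/-- For `π ≠ id_n` whose longest suffix of left-to-right maxima has length `m`,
the tree `T(π)` has depth exactly `m`: every node has height at most `m`,
and some node has height `m`. -/
theorem stmt_11 (n m : ℕ) (π : List ℕ) (hπ : IsPermList n π) (hne : π ≠ idList n)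
    (hm : suffLen π = m) :
    (∀ σ j, IsNodeAt n π σ j → j ≤ m) ∧ (∃ σ, IsNodeAt n π σ m) := by
  constructor
  · rintro σ j ⟨hσ, hj, -⟩
    exact hm ▸ le_suffLen_of_iterate hσ hj hne
  · obtain ⟨σ, hσ, hσm⟩ := exists_iterate m π hπ hne (le_of_eq hm.symm)
    refine ⟨σ, hσ, hσm, ?_⟩
    intro i hi hiπ
    have hmi : bpass^[m - i] π = π := by
      rw [← hiπ, ← Function.iterate_add_apply, show m - i + i = m by omega]
      exact hσm.trans hiπ.symm
    have hcyc : ∀ k, bpass^[k * (m - i)] π = π := by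
      intro k
      induction k with
      | zero => simp
      | succ k ihk =>
        rw [Nat.succ_mul, Function.iterate_add_apply, hmi, ihk]
    have h1 := le_suffLen_of_iterate hπ (hcyc (m + 1)) hne
    rw [hm] at h1
    have h2 : m + 1 ≤ (m + 1) * (m - i) := Nat.le_mul_of_pos_right _ (by omega)
    omega
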